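/- Suppose F2 is atomless conditionally to F1. Then there exists an increasing family of sets (B_t)_{t ∈ [0,1]} in F2 (i.e., B_s ⊆ B_t for s ≤ t) with B_0 = ∅, B_1 = Ω, such that for every t ∈ [0,1], E[1_{B_t} | F1] = t almost surely. Moreover the σ-algebra B generated by the family (B_t)_{t ∈ [0,1]} is independent of F1. -/

import Mathlib

open MeasureTheory ProbabilityTheory Set Filter
open scoped ENNReal

set_option linter.unusedSectionVars false
set_option maxHeartbeats 1000000

/-- The conditional expectation (under `P`, defined on `F2`) of the indicator of `A`
given the sub-σ-algebra `F1`. -/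
noncomputable def cexpInd {Ω : Type*} (F1 F2 : MeasurableSpace Ω) (P : @Measure Ω F2)
    (A : Set Ω) : Ω → ℝ :=
  P[A.indicator (fun _ => (1 : ℝ)) | F1]

/-- `F2` is atomless conditionally to `F1`: for every `A ∈ F2` there is `B ∈ F2`, `B ⊆ A`,
with `0 < E[1_B | F1] < E[1_A | F1]` almost surely on the set `{E[1_A | F1] > 0}`. -/
def CondAtomless {Ω : Type*} (F1 F2 : MeasurableSpace Ω) (P : @Measure Ω F2) : Prop :=
  ∀ A : Set Ω, MeasurableSet[F2] A → ∃ B : Set Ω, MeasurableSet[F2] B ∧ B ⊆ A ∧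
    ∀ᵐ ω ∂P, 0 < cexpInd F1 F2 P A ω →
      0 < cexpInd F1 F2 P B ω ∧ cexpInd F1 F2 P B ω < cexpInd F1 F2 P A ω

section Basic
variable {Ω : Type*} {F1 F2 : MeasurableSpace Ω}
  {P : @Measure Ω F2} [IsProbabilityMeasure P]

local notation "f" => cexpInd F1 F2 P

lemma intInd {A : Set Ω} (hA : MeasurableSet[F2] A) :
    Integrable (A.indicator (fun _ => (1 : ℝ))) P :=
  (integrable_const 1).indicator hA

lemma cexpInd_nonneg (A : Set Ω) : 0 ≤ᵐ[P] f A :=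
  condExp_nonneg (Eventually.of_forall (fun ω => Set.indicator_nonneg (fun _ _ => zero_le_one) ω))

lemma cexpInd_le_one (hle : F1 ≤ F2) {A : Set Ω} (hA : MeasurableSet[F2] A) :
    f A ≤ᵐ[P] fun _ => 1 := by
  have h1 : f A ≤ᵐ[P] P[(fun _ => (1:ℝ)) | F1] :=
    condExp_mono (intInd hA) (integrable_const 1)
      (Eventually.of_forall (fun ω => Set.indicator_le_self' (fun _ _ => zero_le_one) ω))
  have h2 : P[(fun _ => (1:ℝ)) | F1] = fun _ => (1:ℝ) := condExp_const hle 1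
  rw [h2] at h1; exact h1

lemma cexpInd_meas {A : Set Ω} : StronglyMeasurable[F1] (f A) := stronglyMeasurable_condExp

lemma cexpInd_integrable (A : Set Ω) : Integrable (f A) P := integrable_condExp

lemma cexpInd_empty : f ∅ =ᵐ[P] fun _ => (0:ℝ) := by
  have h : (∅ : Set Ω).indicator (fun _ => (1:ℝ)) = (0 : Ω → ℝ) := by ext ω; simp
  unfold cexpInd; rw [h, condExp_zero]; rfl

lemma cexpInd_univ (hle : F1 ≤ F2) : f univ =ᵐ[P] fun _ => (1:ℝ) := by
  unfold cexpInd
  simp only [Set.indicator_univ]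
  rw [condExp_const hle]

lemma cexpInd_union (hle : F1 ≤ F2) {A B : Set Ω} (hA : MeasurableSet[F2] A)
    (hB : MeasurableSet[F2] B) (hd : Disjoint A B) :
    f (A ∪ B) =ᵐ[P] f A + f B := by
  unfold cexpInd
  have : (A ∪ B).indicator (fun _ => (1:ℝ)) =
      A.indicator (fun _ => (1:ℝ)) + B.indicator (fun _ => (1:ℝ)) := by
    ext ω
    simp [Set.indicator_union_of_disjoint hd]
  rw [this]
  exact condExp_add (intInd hA) (intInd hB) F1

lemma cexpInd_diff (hle : F1 ≤ F2) {A B : Set Ω} (hA : MeasurableSet[F2] A)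
    (hB : MeasurableSet[F2] B) (hsub : B ⊆ A) :
    f (A \ B) =ᵐ[P] f A - f B := by
  have h := cexpInd_union (P := P) hle (hA.diff hB) hB disjoint_sdiff_self_left
  rw [Set.diff_union_of_subset hsub] at h
  filter_upwards [h] with ω hω
  have : f A ω = f (A \ B) ω + f B ω := hω
  simp [this]

lemma cexpInd_mono (hle : F1 ≤ F2) {A B : Set Ω} (hA : MeasurableSet[F2] A)
    (hB : MeasurableSet[F2] B) (hsub : B ⊆ A) :
    f B ≤ᵐ[P] f A := by
  filter_upwards [cexpInd_diff hle hA hB hsub, cexpInd_nonneg (A \ B)] with ω h1 h2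
  simp only [Pi.sub_apply] at h1
  simp only [Pi.zero_apply] at h2
  linarith

lemma integral_cexpInd (hle : F1 ≤ F2) {A : Set Ω} (hA : MeasurableSet[F2] A) :
    ∫ ω, f A ω ∂P = (P A).toReal := by
  unfold cexpInd
  rw [integral_condExp hle]
  rw [integral_indicator_const _ hA]
  simp [Measure.real]

lemma setIntegral_cexpInd (hle : F1 ≤ F2) {A G : Set Ω} (hA : MeasurableSet[F2] A)
    (hG : MeasurableSet[F1] G) :
    ∫ ω in G, f A ω ∂P = (P (A ∩ G)).toReal := by
  unfold cexpInd
  rw [setIntegral_condExp hle (intInd hA) hG]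
  rw [setIntegral_indicator hA]
  simp [Set.inter_comm, Measure.real]

lemma cexpInd_inter (hle : F1 ≤ F2) {A T : Set Ω} (hA : MeasurableSet[F2] A)
    (hT : MeasurableSet[F1] T) :
    f (A ∩ T) =ᵐ[P] T.indicator (f A) := by
  unfold cexpInd
  have : (A ∩ T).indicator (fun _ => (1:ℝ)) = T.indicator (A.indicator (fun _ => (1:ℝ))) := by
    ext ω; by_cases h1 : ω ∈ T <;> by_cases h2 : ω ∈ A <;>
      simp [Set.indicator_apply, h1, h2]
  rw [this]
  exact condExp_indicator (intInd hA) hT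

end Basic

section Half
variable {Ω : Type*} {F1 F2 : MeasurableSpace Ω}
  {P : @Measure Ω F2} [IsProbabilityMeasure P]

local notation "f" => cexpInd F1 F2 P

lemma half (hle : F1 ≤ F2) (hatom : CondAtomless F1 F2 P) {A : Set Ω}
    (hA : MeasurableSet[F2] A) :
    ∃ B : Set Ω, MeasurableSet[F2] B ∧ B ⊆ A ∧
      ∀ᵐ ω ∂P, (0 < f A ω → 0 < f B ω) ∧ f B ω ≤ f A ω / 2 := by
  obtain ⟨B, hBm, hBsub, hae⟩ := hatom A hA
  set C := A \ B with hCdef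
  have hCm : MeasurableSet[F2] C := hA.diff hBm
  have hfC : f C =ᵐ[P] f A - f B := cexpInd_diff hle hA hBm hBsub
  set W := {ω | f B ω ≤ f C ω} with hWdef
  have hW1 : MeasurableSet[F1] W :=
    measurableSet_le (cexpInd_meas (A := B)).measurable (cexpInd_meas (A := C)).measurable
  set D := (B ∩ W) ∪ (C ∩ Wᶜ) with hDdef
  have hDm : MeasurableSet[F2] D :=
    ((hBm.inter (hle _ hW1)).union (hCm.inter (hle _ hW1.compl)))
  refine ⟨D, hDm, ?_, ?_⟩
  · intro ω hω
    rcases hω with h | h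
    · exact hBsub h.1
    · exact h.1.1
  · have hdisj : Disjoint (B ∩ W) (C ∩ Wᶜ) := by
      apply Set.disjoint_left.mpr
      rintro ω ⟨_, hw⟩ ⟨_, hwc⟩
      exact hwc hw
    have hU := cexpInd_union (P := P) hle (hBm.inter (hle _ hW1)) (hCm.inter (hle _ hW1.compl)) hdisj
    have h1 := cexpInd_inter (P := P) hle hBm hW1
    have h2 := cexpInd_inter (P := P) hle hCm hW1.compl
    filter_upwards [hU, h1, h2, hfC, hae] with ω hUω h1ω h2ω hCω haeω
    have hfCω : f C ω = f A ω - f B ω := hCω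
    have hDval : f D ω = W.indicator (f B) ω + Wᶜ.indicator (f C) ω := by
      rw [hUω]; simp [Pi.add_apply, h1ω, h2ω]
    by_cases hw : ω ∈ W
    · have : f D ω = f B ω := by
        rw [hDval, Set.indicator_of_mem hw, Set.indicator_of_notMem (by simpa using hw)]
        ring
      have hle2 : f B ω ≤ f C ω := hw
      constructor
      · intro hpos; rw [this]; exact (haeω hpos).1
      · rw [this]; rw [hfCω] at hle2; linarith
    · have : f D ω = f C ω := by
        rw [hDval, Set.indicator_of_notMem hw, Set.indicator_of_mem (by simpa using hw)]
        ring
      have hle2 : f C ω < f B ω := not_le.mp hw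
      constructor
      · intro hpos
        rw [this, hfCω]
        have := (haeω hpos).2
        linarith
      · rw [this, hfCω] at *
        linarith

lemma powlem (hle : F1 ≤ F2) (hatom : CondAtomless F1 F2 P) {A : Set Ω}
    (hA : MeasurableSet[F2] A) (n : ℕ) :
    ∃ B : Set Ω, MeasurableSet[F2] B ∧ B ⊆ A ∧
      ∀ᵐ ω ∂P, (0 < f A ω → 0 < f B ω) ∧ f B ω ≤ f A ω / 2 ^ n := by
  induction n with
  | zero => exact ⟨A, hA, subset_rfl, by filter_upwards with ω; exact ⟨id, by simp⟩⟩
  | succ n ih =>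
    obtain ⟨B, hBm, hBsub, hBae⟩ := ih
    obtain ⟨B', hB'm, hB'sub, hB'ae⟩ := half hle hatom hBm
    refine ⟨B', hB'm, hB'sub.trans hBsub, ?_⟩
    filter_upwards [hBae, hB'ae, cexpInd_nonneg (F1 := F1) (P := P) A] with ω h1 h2 h3
    simp only [Pi.zero_apply] at h3
    constructor
    · exact fun hpos => h2.1 (h1.1 hpos)
    · calc f B' ω ≤ f B ω / 2 := h2.2
        _ ≤ (f A ω / 2 ^ n) / 2 := by linarith [h1.2]
        _ = f A ω / 2 ^ (n + 1) := by ring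

end Half

section Union
variable {Ω : Type*} {F1 F2 : MeasurableSpace Ω}
  {P : @Measure Ω F2} [IsProbabilityMeasure P]

local notation "f" => cexpInd F1 F2 P

lemma tendsto_toReal_union {M : ℕ → Set Ω} (hmono : Monotone M) :
    Filter.Tendsto (fun k => (P (M k)).toReal) Filter.atTop
      (nhds ((P (⋃ k, M k)).toReal)) := by
  have h := tendsto_measure_iUnion_atTop (μ := P) hmono
  exact (ENNReal.tendsto_toReal (measure_ne_top P _)).comp h

lemma mono_union_le (hle : F1 ≤ F2) {M : ℕ → Set Ω} (hmono : Monotone M)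
    (hmeas : ∀ k, MeasurableSet[F2] (M k)) {r : ℝ}
    (hbd : ∀ k, ∀ᵐ ω ∂P, f (M k) ω ≤ r) :
    ∀ᵐ ω ∂P, f (⋃ k, M k) ω ≤ r := by
  set U := ⋃ k, M k with hU
  have hUm : MeasurableSet[F2] U := MeasurableSet.iUnion hmeas
  set d := f U with hd
  set h : Ω → ℝ := fun ω => max (d ω - r) 0 with hh
  have hint : Integrable h P := ((cexpInd_integrable U).sub (integrable_const r)).pos_part
  have hnn : 0 ≤ᵐ[P] h := Filter.Eventually.of_forall (fun ω => le_max_right _ _)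
  have key : ∀ k, ∫ ω, h ω ∂P ≤ (P U).toReal - (P (M k)).toReal := by
    intro k
    have hdk : f (M k) ≤ᵐ[P] d := cexpInd_mono hle hUm (hmeas k) (Set.subset_iUnion M k)
    have hb : h ≤ᵐ[P] fun ω => d ω - f (M k) ω := by
      filter_upwards [hdk, hbd k] with ω h1 h2
      simp only [hh, max_le_iff]
      constructor <;> [linarith; linarith]
    calc ∫ ω, h ω ∂P ≤ ∫ ω, (d ω - f (M k) ω) ∂P :=
          integral_mono_ae hint ((cexpInd_integrable U).sub (cexpInd_integrable (M k))) hb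
      _ = (P U).toReal - (P (M k)).toReal := by
          rw [integral_sub (cexpInd_integrable U) (cexpInd_integrable (M k)),
            integral_cexpInd hle hUm, integral_cexpInd hle (hmeas k)]
  have hzero : ∫ ω, h ω ∂P ≤ 0 := by
    have ht : Filter.Tendsto (fun k => (P U).toReal - (P (M k)).toReal) Filter.atTop (nhds 0) := by
      have := tendsto_toReal_union (P := P) hmono
      have := Filter.Tendsto.sub (tendsto_const_nhds (x := (P U).toReal)) this
      simpa [hU] using this
    exact ge_of_tendsto ht (Filter.Eventually.of_forall key)
  have : ∫ ω, h ω ∂P = 0 := le_antisymm hzero (integral_nonneg_of_ae hnn)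
  have := (integral_eq_zero_iff_of_nonneg_ae hnn hint).mp this
  filter_upwards [this] with ω hω
  have h2 : (d ω - r) ⊔ 0 = 0 := hω
  have h4 : d ω - r ≤ (d ω - r) ⊔ 0 := le_sup_left
  rw [h2] at h4
  linarith

lemma mono_union_eq (hle : F1 ≤ F2) {M : ℕ → Set Ω} (hmono : Monotone M)
    (hmeas : ∀ k, MeasurableSet[F2] (M k)) {c : ℕ → ℝ} {t : ℝ}
    (hc : ∀ k, f (M k) =ᵐ[P] fun _ => c k)
    (hct : Filter.Tendsto c Filter.atTop (nhds t)) :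
    f (⋃ k, M k) =ᵐ[P] fun _ => t := by
  set U := ⋃ k, M k with hU
  have hUm : MeasurableSet[F2] U := MeasurableSet.iUnion hmeas
  set d := f U with hd
  have hck : ∀ k, (P (M k)).toReal = c k := by
    intro k
    rw [← integral_cexpInd hle (hmeas k), integral_congr_ae (hc k)]
    simp
  have hPU : (P U).toReal = t := by
    have h1 := tendsto_toReal_union (P := P) hmono
    have h2 : Filter.Tendsto (fun k => (P (M k)).toReal) Filter.atTop (nhds t) := by
      simp only [hck]; exact hct
    exact tendsto_nhds_unique h1 h2
  have hget : ∀ᵐ ω ∂P, t ≤ d ω := by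
    have hall : ∀ᵐ ω ∂P, ∀ k, c k ≤ d ω := by
      rw [ae_all_iff]
      intro k
      filter_upwards [cexpInd_mono hle hUm (hmeas k) (Set.subset_iUnion M k), hc k] with ω h1 h2
      rw [h2] at h1; exact h1
    filter_upwards [hall] with ω hω
    exact le_of_tendsto hct (Filter.Eventually.of_forall hω)
  have hint : Integrable (fun ω => d ω - t) P := (cexpInd_integrable U).sub (integrable_const t)
  have hnn : 0 ≤ᵐ[P] fun ω => d ω - t := by
    filter_upwards [hget] with ω hω; simp [hω]
  have hz : ∫ ω, (d ω - t) ∂P = 0 := by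
    rw [integral_sub (cexpInd_integrable U) (integrable_const t), integral_cexpInd hle hUm]
    simp [hPU]
  have := (integral_eq_zero_iff_of_nonneg_ae hnn hint).mp hz
  filter_upwards [this] with ω hω
  have : d ω - t = 0 := hω
  simp only [hd] at *
  linarith

end Union

section Split
variable {Ω : Type*} {F1 F2 : MeasurableSpace Ω}
  {P : @Measure Ω F2} [IsProbabilityMeasure P]

local notation "f" => cexpInd F1 F2 P

lemma improve (hle : F1 ≤ F2) (hatom : CondAtomless F1 F2 P) {A M : Set Ω}
    (hA : MeasurableSet[F2] A) {c r : ℝ} (hfA : f A =ᵐ[P] fun _ => c) (hrc : r ≤ c)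
    (hM : MeasurableSet[F2] M) (hMA : M ⊆ A) (hMr : ∀ᵐ ω ∂P, f M ω ≤ r)
    (hS : 0 < P {ω | f M ω < r}) :
    ∃ M' : Set Ω, MeasurableSet[F2] M' ∧ M ⊆ M' ∧ M' ⊆ A ∧
      (∀ᵐ ω ∂P, f M' ω ≤ r) ∧ P M < P M' := by
  set S := {ω | f M ω < r} with hSdef
  have hS1 : MeasurableSet[F1] S :=
    measurableSet_lt (cexpInd_meas (A := M)).measurable measurable_const
  set A' := (A \ M) ∩ S with hA'def
  have hA'm : MeasurableSet[F2] A' := (hA.diff hM).inter (hle _ hS1)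
  -- value of f A' on S
  have hdiff : f (A \ M) =ᵐ[P] f A - f M := cexpInd_diff hle hA hM hMA
  have hfA' : f A' =ᵐ[P] S.indicator (f (A \ M)) := cexpInd_inter hle (hA.diff hM) hS1
  have hA'pos : ∀ᵐ ω ∂P, ω ∈ S → (0 < f A' ω ∧ f A' ω = c - f M ω) := by
    filter_upwards [hdiff, hfA', hfA] with ω h1 h2 h3
    intro hωS
    have hval : f A' ω = c - f M ω := by
      rw [h2, Set.indicator_of_mem hωS, h1]
      simp [h3]
    have hωlt : f M ω < r := hωS
    exact ⟨by rw [hval]; linarith, hval⟩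
  -- the sets T n
  set T : ℕ → Set Ω := fun n => {ω | 1 / 2 ^ n ≤ r - f M ω} with hTdef
  have hT1 : ∀ n, MeasurableSet[F1] (T n) := by
    intro n
    exact measurableSet_le measurable_const
      (measurable_const.sub (cexpInd_meas (A := M)).measurable)
  have hTmono : Monotone T := by
    intro i j hij ω hω
    have h2 : (1:ℝ) / 2 ^ j ≤ 1 / 2 ^ i := by
      apply one_div_le_one_div_of_le (by positivity)
      exact pow_le_pow_right₀ one_le_two hij
    exact le_trans h2 hω
  have hScup : S ⊆ ⋃ n, T n := by
    intro ω hω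
    have hpos : 0 < r - f M ω := by
      have : f M ω < r := hω
      linarith
    obtain ⟨n, hn⟩ := exists_pow_lt_of_lt_one hpos (by norm_num : (1:ℝ)/2 < 1)
    refine Set.mem_iUnion.mpr ⟨n, ?_⟩
    have : (1:ℝ)/2^n = (1/2)^n := by rw [div_pow, one_pow]
    simp only [hTdef, Set.mem_setOf_eq, this]
    exact le_of_lt hn
  -- pick n with P (S ∩ T n) > 0
  have hTn : ∃ n, 0 < P (S ∩ T n) := by
    by_contra hcon
    push_neg at hcon
    simp only [le_zero_iff] at hcon
    have : P S = 0 := by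
      have hsub : S ⊆ ⋃ n, S ∩ T n := by
        intro ω hω
        obtain ⟨n, hn⟩ := Set.mem_iUnion.mp (hScup hω)
        exact Set.mem_iUnion.mpr ⟨n, Set.mem_inter hω hn⟩
      refine measure_mono_null hsub ?_
      exact measure_iUnion_null (fun n => hcon n)
    exact absurd this (ne_of_gt hS)
  obtain ⟨n, hPn⟩ := hTn
  obtain ⟨Bn, hBnm, hBnsub, hBnae⟩ := powlem hle hatom hA'm n
  refine ⟨M ∪ (Bn ∩ T n), hM.union (hBnm.inter (hle _ (hT1 n))), Set.subset_union_left, ?_, ?_, ?_⟩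
  · -- subset of A
    apply Set.union_subset hMA
    intro ω hω
    exact (hBnsub hω.1).1.1
  · -- bound
    have hdisj : Disjoint M (Bn ∩ T n) := by
      apply Set.disjoint_left.mpr
      intro ω hωM hωB
      exact (hBnsub hωB.1).1.2 hωM
    have hU := cexpInd_union (P := P) hle hM (hBnm.inter (hle _ (hT1 n))) hdisj
    have hI := cexpInd_inter (P := P) hle hBnm (hT1 n)
    filter_upwards [hU, hI, hBnae, hMr, cexpInd_le_one hle hA'm] with ω h1 h2 h3 h4 h5
    rw [h1]
    simp only [Pi.add_apply]
    rw [h2]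
    by_cases hω : ω ∈ T n
    · rw [Set.indicator_of_mem hω]
      have hb : f Bn ω ≤ 1 / 2 ^ n := le_trans h3.2 (by
        have : f A' ω ≤ 1 := h5
        have h2n : (0:ℝ) < 2 ^ n := by positivity
        rw [div_le_div_iff₀ h2n h2n]
        nlinarith)
      have hω2 : 1 / 2 ^ n ≤ r - f M ω := hω
      linarith
    · rw [Set.indicator_of_notMem hω]
      simpa using h4
  · -- strict measure increase
    have hdisj : Disjoint M (Bn ∩ T n) := by
      apply Set.disjoint_left.mpr
      intro ω hωM hωB
      exact (hBnsub hωB.1).1.2 hωM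
    rw [measure_union hdisj (hBnm.inter (hle _ (hT1 n)))]
    have hpos : 0 < P (Bn ∩ T n) := by
      -- via the set integral over S ∩ T n
      by_contra hz
      push_neg at hz
      simp only [le_zero_iff] at hz
      -- then f Bn = 0 a.e. on S ∩ T n, contradiction with positivity on S
      have hint : ∫ ω in S ∩ T n, f Bn ω ∂P = (P (Bn ∩ (S ∩ T n))).toReal :=
        setIntegral_cexpInd hle hBnm (hS1.inter (hT1 n))
      have hsub2 : Bn ∩ (S ∩ T n) ⊆ Bn ∩ T n := by
        intro ω hω
        exact ⟨hω.1, hω.2.2⟩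
      have hz2 : P (Bn ∩ (S ∩ T n)) = 0 := measure_mono_null hsub2 hz
      rw [hz2] at hint
      simp only [ENNReal.toReal_zero] at hint
      have hnn : 0 ≤ᵐ[P.restrict (S ∩ T n)] f Bn :=
        ae_restrict_of_ae (cexpInd_nonneg (F1 := F1) (P := P) Bn)
      have hzeroae := (integral_eq_zero_iff_of_nonneg_ae hnn
        ((cexpInd_integrable Bn).restrict)).mp hint
      have hzae : ∀ᵐ ω ∂P, ω ∈ S ∩ T n → f Bn ω = 0 :=
        (ae_restrict_iff' (hle _ (hS1.inter (hT1 n)))).mp hzeroae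
      have hposae : ∀ᵐ ω ∂P, ω ∈ S → 0 < f Bn ω := by
        filter_upwards [hA'pos, hBnae] with ω h1 h2 hωS
        exact h2.1 (h1 hωS).1
      have hnm : ∀ᵐ ω ∂P, ω ∉ S ∩ T n := by
        filter_upwards [hzae, hposae] with ω h1 h2
        intro hω
        have := h2 hω.1
        rw [h1 hω] at this
        exact lt_irrefl 0 this
      have hnull : P (S ∩ T n) = 0 := by
        have := ae_iff.mp hnm
        simpa [not_not, Set.setOf_mem_eq] using this
      exact absurd hnull (ne_of_gt hPn)
    exact ENNReal.lt_add_right (measure_ne_top P M) (ne_of_gt hpos)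

end Split

section Split2
variable {Ω : Type*} {F1 F2 : MeasurableSpace Ω}
  {P : @Measure Ω F2} [IsProbabilityMeasure P]

local notation "f" => cexpInd F1 F2 P

lemma split (hle : F1 ≤ F2) (hatom : CondAtomless F1 F2 P) {A : Set Ω}
    (hA : MeasurableSet[F2] A) {c r : ℝ} (hfA : f A =ᵐ[P] fun _ => c)
    (hr0 : 0 ≤ r) (hrc : r ≤ c) :
    ∃ B : Set Ω, MeasurableSet[F2] B ∧ B ⊆ A ∧ f B =ᵐ[P] fun _ => r := by
  classical
  set G : Set (Set Ω) := {B | MeasurableSet[F2] B ∧ B ⊆ A ∧ ∀ᵐ ω ∂P, f B ω ≤ r} with hGdef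
  have hempty : (∅ : Set Ω) ∈ G := by
    refine ⟨MeasurableSet.empty, Set.empty_subset A, ?_⟩
    filter_upwards [cexpInd_empty (F1 := F1) (P := P)] with ω h
    rw [h]; exact hr0
  set val : Set Ω → ℝ := fun B => (P B).toReal with hvaldef
  have hval1 : ∀ B : Set Ω, val B ≤ 1 := by
    intro B
    have h := prob_le_one (μ := P) (s := B)
    have := ENNReal.toReal_mono (by norm_num) h
    simpa using this
  set sup : Set Ω → ℝ := fun B0 => sSup (val '' {B | B ∈ G ∧ B0 ⊆ B}) with hsupdef
  have hbdd : ∀ B0 : Set Ω, BddAbove (val '' {B | B ∈ G ∧ B0 ⊆ B}) := by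
    intro B0
    refine ⟨1, ?_⟩
    rintro x ⟨B, _, rfl⟩
    exact hval1 B
  have hpick : ∀ B0 ∈ G, ∃ B', B' ∈ G ∧ B0 ⊆ B' ∧ (sup B0 + val B0) / 2 ≤ val B' := by
    intro B0 hB0
    have hmem : val B0 ∈ val '' {B | B ∈ G ∧ B0 ⊆ B} := ⟨B0, ⟨hB0, subset_rfl⟩, rfl⟩
    have hle0 : val B0 ≤ sup B0 := le_csSup (hbdd B0) hmem
    rcases eq_or_lt_of_le hle0 with heq | hlt
    · exact ⟨B0, hB0, subset_rfl, by rw [← heq]; linarith⟩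
    · have hmid : (sup B0 + val B0) / 2 < sup B0 := by linarith
      obtain ⟨x, hx, hxgt⟩ := exists_lt_of_lt_csSup ⟨val B0, hmem⟩ hmid
      obtain ⟨B', ⟨hB'G, hB'sub⟩, rfl⟩ := hx
      exact ⟨B', hB'G, hB'sub, le_of_lt hxgt⟩
  choose pickF hpickG hpickSub hpickVal using hpick
  set g : {B : Set Ω // B ∈ G} → {B : Set Ω // B ∈ G} :=
    fun p => ⟨pickF p.1 p.2, hpickG p.1 p.2⟩ with hgdef
  set Mq : ℕ → {B : Set Ω // B ∈ G} := fun k => g^[k] ⟨∅, hempty⟩ with hMqdef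
  set M : ℕ → Set Ω := fun k => (Mq k).1 with hMdef
  have hstep : ∀ k, Mq (k + 1) = g (Mq k) := by
    intro k
    simp only [hMqdef]
    exact Function.iterate_succ_apply' g k _
  have hMG : ∀ k, M k ∈ G := fun k => (Mq k).2
  have hMstep : ∀ k, M (k + 1) = pickF (M k) (hMG k) := by
    intro k
    have := congrArg Subtype.val (hstep k)
    exact this
  have hMsub : ∀ k, M k ⊆ M (k + 1) := by
    intro k
    rw [hMstep k]
    exact hpickSub (M k) (hMG k)
  have hmono : Monotone M := monotone_nat_of_le_succ hMsub
  have hvalstep : ∀ k, (sup (M k) + val (M k)) / 2 ≤ val (M (k + 1)) := by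
    intro k
    rw [hMstep k]
    exact hpickVal (M k) (hMG k)
  set Minf := ⋃ k, M k with hMinfdef
  have hMinfm : MeasurableSet[F2] Minf := MeasurableSet.iUnion (fun k => (hMG k).1)
  have hMinfA : Minf ⊆ A := Set.iUnion_subset (fun k => (hMG k).2.1)
  have hMinfr : ∀ᵐ ω ∂P, f Minf ω ≤ r :=
    mono_union_le hle hmono (fun k => (hMG k).1) (fun k => (hMG k).2.2)
  refine ⟨Minf, hMinfm, hMinfA, ?_⟩
  by_contra hne
  -- P {f Minf < r} > 0
  have hSpos : 0 < P {ω | f Minf ω < r} := by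
    rw [pos_iff_ne_zero]
    intro hzero
    apply hne
    have h1 : P {ω | ¬ f Minf ω ≤ r} = 0 := ae_iff.mp hMinfr
    have hsub : {ω | ¬ f Minf ω = r} ⊆ {ω | f Minf ω < r} ∪ {ω | ¬ f Minf ω ≤ r} := by
      intro ω hω
      by_cases h : f Minf ω ≤ r
      · exact Or.inl (lt_of_le_of_ne h hω)
      · exact Or.inr h
    have : P {ω | ¬ f Minf ω = r} = 0 :=
      measure_mono_null hsub (by
        refine measure_union_null hzero h1)
    exact ae_iff.mpr this
  obtain ⟨M', hM'm, hM'sub, hM'A, hM'r, hM'gt⟩ :=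
    improve hle hatom hA hfA hrc hMinfm hMinfA hMinfr hSpos
  have hM'G : M' ∈ G := ⟨hM'm, hM'A, hM'r⟩
  set m := val M' with hmdef
  set u := val Minf with hudef
  have hum : u < m := by
    exact ENNReal.toReal_lt_toReal (measure_ne_top P Minf) (measure_ne_top P M') |>.mpr hM'gt
  have hks : ∀ k, m ≤ sup (M k) := by
    intro k
    apply le_csSup (hbdd (M k))
    exact ⟨M', ⟨hM'G, (Set.subset_iUnion M k).trans hM'sub⟩, rfl⟩
  have hak : ∀ k, val (M k) ≤ u := by
    intro k
    exact ENNReal.toReal_mono (measure_ne_top P Minf) (measure_mono (Set.subset_iUnion M k))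
  have hiter : ∀ k, m - val (M k) ≤ (m - val (M 0)) / 2 ^ k := by
    intro k
    induction k with
    | zero => simp
    | succ k ih =>
      have h1 := hvalstep k
      have h2 := hks k
      have : m - val (M (k + 1)) ≤ (m - val (M k)) / 2 := by linarith
      calc m - val (M (k + 1)) ≤ (m - val (M k)) / 2 := this
        _ ≤ ((m - val (M 0)) / 2 ^ k) / 2 := by linarith
        _ = (m - val (M 0)) / 2 ^ (k + 1) := by ring
  have hgap : 0 < m - u := by linarith
  have hgap0 : 0 < m - val (M 0) := by
    have := hak 0
    linarith
  obtain ⟨n, hn⟩ := exists_pow_lt_of_lt_one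
    (div_pos hgap hgap0) (by norm_num : (1:ℝ)/2 < 1)
  have hn2 : (m - val (M 0)) / 2 ^ n < m - u := by
    have h2n : (0:ℝ) < 2 ^ n := by positivity
    have heq : ((1:ℝ)/2) ^ n = 1 / 2 ^ n := by rw [div_pow, one_pow]
    rw [heq, div_lt_div_iff₀ h2n hgap0] at hn
    rw [div_lt_iff₀ h2n]
    nlinarith
  have := hiter n
  have := hak n
  linarith

end Split2

section Dyadic
variable {Ω : Type*} {F1 F2 : MeasurableSpace Ω}
  {P : @Measure Ω F2} [IsProbabilityMeasure P]

local notation "f" => cexpInd F1 F2 P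

lemma mid (hle : F1 ≤ F2) (hatom : CondAtomless F1 F2 P) {D1 D2 : Set Ω}
    (h1 : MeasurableSet[F2] D1) (h2 : MeasurableSet[F2] D2) (hsub : D1 ⊆ D2)
    {a b : ℝ} (hf1 : f D1 =ᵐ[P] fun _ => a) (hf2 : f D2 =ᵐ[P] fun _ => b) (hab : a ≤ b) :
    ∃ E : Set Ω, MeasurableSet[F2] E ∧ D1 ⊆ E ∧ E ⊆ D2 ∧ f E =ᵐ[P] fun _ => (a + b) / 2 := by
  have hdm : MeasurableSet[F2] (D2 \ D1) := h2.diff h1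
  have hfd : f (D2 \ D1) =ᵐ[P] fun _ => b - a := by
    filter_upwards [cexpInd_diff hle h2 h1 hsub, hf1, hf2] with ω hω ha hb
    simp only [Pi.sub_apply] at hω
    rw [hω, ha, hb]
  obtain ⟨B, hBm, hBsub, hBf⟩ := split hle hatom hdm hfd
    (by linarith : (0:ℝ) ≤ (b - a) / 2) (by linarith : (b - a)/2 ≤ b - a)
  refine ⟨D1 ∪ B, h1.union hBm, Set.subset_union_left, ?_, ?_⟩
  · exact Set.union_subset hsub (hBsub.trans Set.diff_subset)
  · have hdisj : Disjoint D1 B := by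
      apply Set.disjoint_left.mpr
      intro ω hω1 hωB
      exact (hBsub hωB).2 hω1
    filter_upwards [cexpInd_union (P := P) hle h1 hBm hdisj, hf1, hBf] with ω hω ha hb
    rw [hω]
    simp only [Pi.add_apply]
    rw [ha, hb]
    ring

def DyInv {Ω : Type*} (F1 F2 : MeasurableSpace Ω) (P : @Measure Ω F2)
    (n : ℕ) (g : ℕ → Set Ω) : Prop :=
  (∀ k, MeasurableSet[F2] (g k)) ∧ Monotone g ∧ g 0 = ∅ ∧
  (∀ k, 2 ^ n ≤ k → g k = Set.univ) ∧
  (∀ k, k ≤ 2 ^ n → cexpInd F1 F2 P (g k) =ᵐ[P] fun _ => (k : ℝ) / 2 ^ n)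

lemma dyinv_base (hle : F1 ≤ F2) :
    DyInv F1 F2 P 0 (fun k => if k = 0 then ∅ else Set.univ) := by
  refine ⟨?_, ?_, ?_, ?_, ?_⟩
  · intro k
    by_cases h : k = 0 <;> simp [h]
  · intro i j hij
    by_cases hi : i = 0
    · simp [hi]
    · have hj : j ≠ 0 := by omega
      simp [hi, hj]
  · simp
  · intro k hk
    have : k ≠ 0 := by simpa using Nat.one_le_iff_ne_zero.mp hk
    simp [this]
  · intro k hk
    interval_cases k
    · simpa using cexpInd_empty (F1 := F1) (P := P)
    · simpa using cexpInd_univ (P := P) hle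

lemma dyinv_step (hle : F1 ≤ F2) (hatom : CondAtomless F1 F2 P) {n : ℕ} {g : ℕ → Set Ω}
    (hg : DyInv F1 F2 P n g) :
    ∃ g' : ℕ → Set Ω, DyInv F1 F2 P (n + 1) g' ∧ ∀ k, g' (2 * k) = g k := by
  obtain ⟨hmeas, hmono, h0, htop, hval⟩ := hg
  have hmid : ∀ j : ℕ, ∃ Ej : Set Ω, MeasurableSet[F2] Ej ∧ g j ⊆ Ej ∧ Ej ⊆ g (j + 1) ∧
      (j < 2 ^ n → f Ej =ᵐ[P] fun _ => ((2 * j + 1 : ℕ) : ℝ) / 2 ^ (n + 1)) := by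
    intro j
    by_cases hj : j < 2 ^ n
    · obtain ⟨E, hEm, hE1, hE2, hEf⟩ := mid hle hatom (hmeas j) (hmeas (j + 1))
        (hmono (Nat.le_succ j)) (hval j (le_of_lt hj)) (hval (j + 1) hj)
        (by
          apply div_le_div_of_nonneg_right _ (by positivity)
          · exact_mod_cast Nat.cast_le.mpr (Nat.le_succ j))
      refine ⟨E, hEm, hE1, hE2, fun _ => ?_⟩
      have harith : ((j : ℝ) / 2 ^ n + ((j + 1 : ℕ) : ℝ) / 2 ^ n) / 2
          = ((2 * j + 1 : ℕ) : ℝ) / 2 ^ (n + 1) := by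
        push_cast
        have h2n : (2:ℝ) ^ n ≠ 0 := by positivity
        field_simp
        ring
      rw [harith] at hEf
      exact hEf
    · exact ⟨g j, hmeas j, subset_rfl, hmono (Nat.le_succ j), fun h => absurd h hj⟩
  choose E hE1 hE2 hE3 hE4 using hmid
  set g' : ℕ → Set Ω := fun k => if k % 2 = 0 then g (k / 2) else E (k / 2) with hg'def
  have hcompat : ∀ k, g' (2 * k) = g k := by
    intro k
    simp only [hg'def]
    rw [if_pos (show 2 * k % 2 = 0 by omega)]
    have h2 : 2 * k / 2 = k := by omega
    rw [h2]
  refine ⟨g', ⟨?_, ?_, ?_, ?_, ?_⟩, hcompat⟩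
  · intro k
    simp only [hg'def]
    by_cases h : k % 2 = 0
    · rw [if_pos h]; exact hmeas _
    · rw [if_neg h]; exact hE1 _
  · apply monotone_nat_of_le_succ
    intro k
    rcases Nat.even_or_odd k with he | ho
    · have hk2 : k % 2 = 0 := Nat.even_iff.mp he
      have hk12 : (k + 1) % 2 = 1 := by omega
      have hdiv : (k + 1) / 2 = k / 2 := by omega
      simp only [hg'def, hk2, if_true, hk12]
      rw [if_neg (show ¬(1:ℕ) = 0 by norm_num), hdiv]
      exact hE2 _
    · have hk2 : k % 2 = 1 := Nat.odd_iff.mp ho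
      have hk12 : (k + 1) % 2 = 0 := by omega
      have hdiv : (k + 1) / 2 = k / 2 + 1 := by omega
      simp only [hg'def]
      rw [if_neg (show ¬k % 2 = 0 by omega), if_pos (show (k+1) % 2 = 0 by omega), hdiv]
      exact hE3 _
  · show (if 0 % 2 = 0 then g (0 / 2) else E (0 / 2)) = ∅
    norm_num
    exact h0
  · intro k hk
    by_cases h : k % 2 = 0
    · simp only [hg'def]
      rw [if_pos h]
      apply htop
      omega
    · simp only [hg'def]
      rw [if_neg h]
      have hj : 2 ^ n ≤ k / 2 := by omega
      have := htop (k / 2) hj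
      apply Set.eq_univ_of_univ_subset
      rw [← this]
      exact hE2 _
  · intro k hk
    by_cases h : k % 2 = 0
    · simp only [hg'def]
      rw [if_pos h]
      have hk2 : k / 2 ≤ 2 ^ n := by omega
      have := hval (k / 2) hk2
      have harith : ((k / 2 : ℕ) : ℝ) / 2 ^ n = (k : ℝ) / 2 ^ (n + 1) := by
        have hkk : (k : ℝ) = 2 * ((k / 2 : ℕ) : ℝ) := by
          have : k = 2 * (k / 2) := by omega
          exact_mod_cast congrArg (Nat.cast : ℕ → ℝ) this
        rw [hkk]
        have h2n : (2:ℝ) ^ n ≠ 0 := by positivity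
        rw [pow_succ]
        field_simp
      rw [← harith]
      exact this
    · simp only [hg'def]
      rw [if_neg h]
      have hj : k / 2 < 2 ^ n := by omega
      have := hE4 (k / 2) hj
      have hkk : 2 * (k / 2) + 1 = k := by omega
      rw [hkk] at this
      exact this

end Dyadic

theorem stmt2 {Ω : Type*} (F1 F2 : MeasurableSpace Ω) (hle : F1 ≤ F2)
    (P : @Measure Ω F2) (hP : @IsProbabilityMeasure Ω F2 P)
    (hatomless : CondAtomless F1 F2 P) :
    ∃ B : ℝ → Set Ω,
      (∀ s ∈ Set.Icc (0 : ℝ) 1, ∀ t ∈ Set.Icc (0 : ℝ) 1, s ≤ t → B s ⊆ B t) ∧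
      B 0 = ∅ ∧ B 1 = Set.univ ∧
      (∀ t ∈ Set.Icc (0 : ℝ) 1, MeasurableSet[F2] (B t)) ∧
      (∀ t ∈ Set.Icc (0 : ℝ) 1, cexpInd F1 F2 P (B t) =ᵐ[P] fun _ => t) ∧
      ProbabilityTheory.Indep
        (MeasurableSpace.generateFrom {S : Set Ω | ∃ t ∈ Set.Icc (0 : ℝ) 1, S = B t})
        F1 P := by
  classical
  haveI := hP
  -- build the dyadic grid
  have hstepex : ∀ n (g : ℕ → Set Ω), DyInv F1 F2 P n g →
      ∃ g' : ℕ → Set Ω, DyInv F1 F2 P (n + 1) g' ∧ ∀ k, g' (2 * k) = g k :=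
    fun n g hg => dyinv_step hle hatomless hg
  choose stepF hstep1 hstep2 using hstepex
  let D : ∀ n : ℕ, {g : ℕ → Set Ω // DyInv F1 F2 P n g} :=
    fun n => Nat.rec ⟨_, dyinv_base hle⟩ (fun n p => ⟨stepF n p.1 p.2, hstep1 n p.1 p.2⟩) n
  set C : ℕ → ℕ → Set Ω := fun n => (D n).1 with hCdef
  have hCInv : ∀ n, DyInv F1 F2 P n (C n) := fun n => (D n).2
  have hCcompat : ∀ n k, C (n + 1) (2 * k) = C n k := by
    intro n k
    have h : C (n + 1) = stepF n (C n) ((D n).2) := rfl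
    rw [h]
    exact hstep2 n (C n) ((D n).2) k
  have hCm : ∀ n k, MeasurableSet[F2] (C n k) := fun n => (hCInv n).1
  have hCmono : ∀ n, Monotone (C n) := fun n => (hCInv n).2.1
  have hC0 : ∀ n, C n 0 = ∅ := fun n => (hCInv n).2.2.1
  have hCtop : ∀ n k, 2 ^ n ≤ k → C n k = Set.univ := fun n => (hCInv n).2.2.2.1
  have hCval : ∀ n k, k ≤ 2 ^ n → cexpInd F1 F2 P (C n k) =ᵐ[P] fun _ => (k : ℝ) / 2 ^ n :=
    fun n => (hCInv n).2.2.2.2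
  -- the family
  set B : ℝ → Set Ω := fun t => ⋃ n, C n ⌊t * 2 ^ n⌋₊ with hBdef
  have hBmono : ∀ s t : ℝ, s ≤ t → B s ⊆ B t := by
    intro s t hst
    apply Set.iUnion_mono
    intro n
    apply hCmono n
    apply Nat.floor_le_floor
    have : (0:ℝ) ≤ 2 ^ n := by positivity
    nlinarith
  have hfloor1 : ∀ t : ℝ, 0 ≤ t → ∀ n, 2 * ⌊t * 2 ^ n⌋₊ ≤ ⌊t * 2 ^ (n + 1)⌋₊ := by
    intro t ht n
    apply Nat.le_floor
    push_cast
    have h1 : (⌊t * 2 ^ n⌋₊ : ℝ) ≤ t * 2 ^ n := Nat.floor_le (by positivity)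
    rw [pow_succ]
    nlinarith
  have hMn : ∀ t : ℝ, 0 ≤ t → Monotone (fun n => C n ⌊t * 2 ^ n⌋₊) := by
    intro t ht
    apply monotone_nat_of_le_succ
    intro n
    calc C n ⌊t * 2 ^ n⌋₊ = C (n + 1) (2 * ⌊t * 2 ^ n⌋₊) := (hCcompat n _).symm
      _ ⊆ C (n + 1) ⌊t * 2 ^ (n + 1)⌋₊ := hCmono (n + 1) (hfloor1 t ht n)
  have hfloorle : ∀ t : ℝ, t ∈ Set.Icc (0:ℝ) 1 → ∀ n, ⌊t * 2 ^ n⌋₊ ≤ 2 ^ n := by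
    intro t ht n
    have h1 : t * 2 ^ n ≤ ((2 ^ n : ℕ) : ℝ) := by
      push_cast
      have : (0:ℝ) ≤ 2 ^ n := by positivity
      nlinarith [ht.2]
    have := Nat.floor_le_floor h1
    rwa [Nat.floor_natCast] at this
  -- the value at t
  have hBval : ∀ t ∈ Set.Icc (0:ℝ) 1, cexpInd F1 F2 P (B t) =ᵐ[P] fun _ => t := by
    intro t ht
    apply mono_union_eq hle (hMn t ht.1) (fun n => hCm n _)
      (c := fun n => (⌊t * 2 ^ n⌋₊ : ℝ) / 2 ^ n)
      (fun n => hCval n _ (hfloorle t ht n))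
    -- tendsto
    have hlow : ∀ n : ℕ, t - (1/2 : ℝ) ^ n ≤ (⌊t * 2 ^ n⌋₊ : ℝ) / 2 ^ n := by
      intro n
      have h1 : t * 2 ^ n < ⌊t * 2 ^ n⌋₊ + 1 := Nat.lt_floor_add_one _
      have h2n : (0:ℝ) < 2 ^ n := by positivity
      have heq : ((1:ℝ)/2) ^ n = 1 / 2 ^ n := by rw [div_pow, one_pow]
      rw [heq, sub_le_iff_le_add, ← add_div, le_div_iff₀ h2n]
      linarith
    have hup : ∀ n : ℕ, (⌊t * 2 ^ n⌋₊ : ℝ) / 2 ^ n ≤ t := by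
      intro n
      have h2n : (0:ℝ) < 2 ^ n := by positivity
      rw [div_le_iff₀ h2n]
      exact Nat.floor_le (mul_nonneg ht.1 (by positivity))
    have hlt : Filter.Tendsto (fun n : ℕ => t - (1/2 : ℝ) ^ n) Filter.atTop (nhds t) := by
      have h2 : Filter.Tendsto (fun n : ℕ => (1/2 : ℝ) ^ n) Filter.atTop (nhds 0) := by
        apply tendsto_pow_atTop_nhds_zero_of_lt_one <;> norm_num
      have := Filter.Tendsto.sub (tendsto_const_nhds (x := t)) h2
      simpa using this
    exact tendsto_of_tendsto_of_tendsto_of_le_of_le hlt tendsto_const_nhds hlow hup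
  refine ⟨B, ?_, ?_, ?_, ?_, hBval, ?_⟩
  · intro s _ t _ hst
    exact hBmono s t hst
  · -- B 0 = ∅
    apply Set.eq_empty_of_subset_empty
    apply Set.iUnion_subset
    intro n
    have : ⌊(0:ℝ) * 2 ^ n⌋₊ = 0 := by norm_num
    rw [this, hC0 n]
  · -- B 1 = univ
    apply Set.eq_univ_of_univ_subset
    have h1 : ⌊(1:ℝ) * 2 ^ 0⌋₊ = 1 := by norm_num
    have h2 : C 0 1 = Set.univ := hCtop 0 1 (by norm_num)
    calc Set.univ = C 0 ⌊(1:ℝ) * 2 ^ 0⌋₊ := by rw [h1, h2]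
      _ ⊆ B 1 := Set.subset_iUnion (fun n => C n ⌊(1:ℝ) * 2 ^ n⌋₊) 0
  · intro t _
    exact MeasurableSet.iUnion (fun n => hCm n _)
  · -- independence
    set p1 : Set (Set Ω) := {S : Set Ω | ∃ t ∈ Set.Icc (0 : ℝ) 1, S = B t} with hp1def
    set p2 : Set (Set Ω) := {s : Set Ω | MeasurableSet[F1] s} with hp2def
    have hp1pi : IsPiSystem p1 := by
      rintro S1 ⟨t1, ht1, rfl⟩ S2 ⟨t2, ht2, rfl⟩ _
      rcases le_total t1 t2 with h | h
      · refine ⟨t1, ht1, ?_⟩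
        rw [Set.inter_eq_left.mpr (hBmono t1 t2 h)]
      · refine ⟨t2, ht2, ?_⟩
        rw [Set.inter_eq_right.mpr (hBmono t2 t1 h)]
    have hp2pi : IsPiSystem p2 := by
      intro s hs t ht _
      exact hs.inter ht
    have hm1le : MeasurableSpace.generateFrom p1 ≤ F2 := by
      apply MeasurableSpace.generateFrom_le
      rintro S ⟨t, _, rfl⟩
      exact MeasurableSet.iUnion (fun n => hCm n _)
    have hPBt : ∀ t ∈ Set.Icc (0:ℝ) 1, ∀ T, MeasurableSet[F1] T →
        (P (B t ∩ T)).toReal = t * (P T).toReal := by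
      intro t ht T hT
      have h1 : ∫ ω in T, cexpInd F1 F2 P (B t) ω ∂P = (P (B t ∩ T)).toReal :=
        setIntegral_cexpInd hle (MeasurableSet.iUnion (fun n => hCm n _)) hT
      have h2 : ∫ ω in T, cexpInd F1 F2 P (B t) ω ∂P = ∫ _ω in T, t ∂P :=
        integral_congr_ae (ae_restrict_of_ae (hBval t ht))
      rw [h2, setIntegral_const] at h1
      rw [← h1, smul_eq_mul]
      simp only [Measure.real]; ring
    have hindep : ProbabilityTheory.IndepSets p1 p2 P := by
      rw [ProbabilityTheory.IndepSets_iff]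
      rintro S T ⟨t, ht, rfl⟩ hT
      have hTm : MeasurableSet[F1] T := hT
      have h1 : (P (B t ∩ T)).toReal = t * (P T).toReal := hPBt t ht T hTm
      have h2 : (P (B t)).toReal = t := by
        have := hPBt t ht Set.univ MeasurableSet.univ
        simpa using this
      have hfin1 : P (B t ∩ T) ≠ ⊤ := measure_ne_top P _
      have hfin2 : P (B t) * P T ≠ ⊤ :=
        ENNReal.mul_ne_top (measure_ne_top P _) (measure_ne_top P _)
      apply (ENNReal.toReal_eq_toReal_iff' hfin1 hfin2).mp
      rw [ENNReal.toReal_mul, h1, h2]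
    exact ProbabilityTheory.IndepSets.indep hm1le hle hp1pi hp2pi rfl
      (@MeasurableSpace.generateFrom_measurableSet Ω F1).symm hindep
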